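/- arXiv:1505.05949 — 6 statements merged into one kernel-verified Lean document; each statement's English description precedes it below -/
import Mathlib

section
/- In a symmetric (v,k,λ)-covering with 2-regular excess, every point lies in exactly k blocks. -/
/-- In a symmetric (v,k,λ)-covering with 2-regular excess, every point lies in exactly k blocks. -/
theorem stmt_1 (v k lam : ℕ) (hv : 0 < v) (hk : 2 ≤ k) (hl : 0 < lam)
    (blocks : Fin v → Finset (Fin v))
    (hsize : ∀ b, (blocks b).card = k)
    (hcov : ∀ x y : Fin v, x ≠ y →
      lam ≤ (Finset.univ.filter fun b => x ∈ blocks b ∧ y ∈ blocks b).card)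
    (hreg : ∀ x : Fin v,
      ∑ y ∈ Finset.univ.erase x,
        (Finset.univ.filter fun b => x ∈ blocks b ∧ y ∈ blocks b).card = lam * (v - 1) + 2) :
    ∀ x : Fin v, (Finset.univ.filter fun b => x ∈ blocks b).card = k := by
  -- key: r_x * (k-1) = lam*(v-1)+2 for every x
  have key : ∀ x : Fin v,
      (Finset.univ.filter fun b => x ∈ blocks b).card * (k - 1) = lam * (v - 1) + 2 := by
    intro x
    rw [← hreg x]
    simp_rw [Finset.card_filter]
    rw [Finset.sum_comm, Finset.sum_mul]
    refine Finset.sum_congr rfl fun b _ => ?_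
    by_cases hx : x ∈ blocks b
    · simp only [hx, true_and, if_true, one_mul]
      have : ∑ y ∈ Finset.univ.erase x, (if y ∈ blocks b then 1 else 0)
          = ((Finset.univ.erase x).filter fun y => y ∈ blocks b).card := by
        rw [Finset.card_filter]
      rw [this]
      have h2 : (Finset.univ.erase x).filter (fun y => y ∈ blocks b)
          = (blocks b).erase x := by
        ext y
        simp [Finset.mem_erase, and_comm]
      rw [h2, Finset.card_erase_of_mem hx, hsize]
    · simp [hx]
  -- sum of r_x over x equals v * k
  have total : ∑ x : Fin v, (Finset.univ.filter fun b => x ∈ blocks b).card = v * k := by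
    simp_rw [Finset.card_filter]
    rw [Finset.sum_comm]
    have : ∀ b : Fin v, ∑ x : Fin v, (if x ∈ blocks b then 1 else 0) = k := by
      intro b
      rw [← Finset.card_filter]
      simp only [Finset.filter_mem_eq_inter, Finset.univ_inter]
      exact hsize b
    calc ∑ b : Fin v, ∑ x : Fin v, (if x ∈ blocks b then 1 else 0)
        = ∑ b : Fin v, k := Finset.sum_congr rfl fun b _ => this b
      _ = v * k := by simp [Finset.card_univ, mul_comm]
  -- deduce k*(k-1) = lam*(v-1)+2
  have hvk : v * (k * (k - 1)) = v * (lam * (v - 1) + 2) := by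
    have h1 : ∑ x : Fin v, (Finset.univ.filter fun b => x ∈ blocks b).card * (k - 1)
        = ∑ x : Fin v, (lam * (v - 1) + 2) := Finset.sum_congr rfl fun x _ => key x
    rw [← Finset.sum_mul, total, Finset.sum_const, Finset.card_univ, Fintype.card_fin,
      smul_eq_mul] at h1
    rw [← mul_assoc, h1]
  have hkk : k * (k - 1) = lam * (v - 1) + 2 := Nat.eq_of_mul_eq_mul_left hv hvk
  intro x
  have := key x
  rw [← hkk] at this
  have hk1 : 0 < k - 1 := by omega
  exact Nat.eq_of_mul_eq_mul_right hk1 this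
end

section
/- Let p be a prime and a a positive integer with p^α exactly or at least dividing a, written a = ā·p^α with ā not divisible by p. Define g_n(a) by g_1 = 1, g_2 = a, g_n = a·g_{n-1} − g_{n-2}. Then for every non-negative integer i: g_{2i}(a) ≡ (-1)^{i+1} · i · ā · p^α (mod p^{2α}) and g_{2i+1}(a) ≡ (-1)^i (mod p^{2α}). -/
def g (a : ℤ) : ℕ → ℤ
  | 0 => 0
  | 1 => 1
  | n + 2 => a * g a (n + 1) - g a n

/-- If a = ā·p^α with p ∤ ā, then g_{2i} ≡ (-1)^{i+1}·i·ā·p^α and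
    g_{2i+1} ≡ (-1)^i, both mod p^{2α}. -/
theorem stmt_4 (p : ℕ) (hp : p.Prime) (a abar : ℤ) (α : ℕ) (hα : 1 ≤ α) (hpos : 0 < a)
    (ha : a = abar * (p : ℤ) ^ α) (habar : ¬ (p : ℤ) ∣ abar) (i : ℕ) :
    (g a (2 * i) ≡ (-1) ^ (i + 1) * i * abar * (p : ℤ) ^ α [ZMOD ((p : ℤ) ^ (2 * α))]) ∧
    (g a (2 * i + 1) ≡ (-1) ^ i [ZMOD ((p : ℤ) ^ (2 * α))]) := by
  have hsq : a * ((p : ℤ) ^ α) ≡ 0 [ZMOD ((p : ℤ) ^ (2 * α))] := by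
    have : a * ((p : ℤ) ^ α) = abar * (p : ℤ) ^ (2 * α) := by
      rw [ha, two_mul, pow_add]; ring
    rw [this]
    exact (Int.modEq_zero_iff_dvd.mpr ⟨abar, by ring⟩)
  induction i with
  | zero =>
    constructor
    · show g a 0 ≡ _ [ZMOD _]
      simp [g]
    · show g a 1 ≡ _ [ZMOD _]
      simp [g]
  | succ i ih =>
    obtain ⟨h1, h2⟩ := ih
    have e1 : 2 * (i + 1) = (2 * i) + 2 := by ring
    have e2 : 2 * (i + 1) + 1 = (2 * i + 1) + 2 := by ring
    have hg1 : g a (2 * (i + 1)) = a * g a (2 * i + 1) - g a (2 * i) := by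
      rw [e1]; rfl
    have hg2 : g a (2 * (i + 1) + 1) = a * g a (2 * (i + 1)) - g a (2 * i + 1) := by
      rw [e2, e1]; rfl
    have key1 : g a (2 * (i + 1)) ≡ (-1) ^ (i + 1 + 1) * (i + 1 : ℕ) * abar * (p : ℤ) ^ α
        [ZMOD ((p : ℤ) ^ (2 * α))] := by
      rw [hg1]
      calc a * g a (2 * i + 1) - g a (2 * i)
          ≡ a * (-1) ^ i - ((-1) ^ (i + 1) * i * abar * (p : ℤ) ^ α)
            [ZMOD ((p : ℤ) ^ (2 * α))] := ((h2.mul_left a).sub h1)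
        _ = (-1) ^ (i + 1 + 1) * (i + 1 : ℕ) * abar * (p : ℤ) ^ α := by
            rw [ha]; push_cast; ring
    refine ⟨key1, ?_⟩
    rw [hg2]
    calc a * g a (2 * (i + 1)) - g a (2 * i + 1)
        ≡ a * ((-1) ^ (i + 1 + 1) * (i + 1 : ℕ) * abar * (p : ℤ) ^ α) - (-1) ^ i
          [ZMOD ((p : ℤ) ^ (2 * α))] := ((key1.mul_left a).sub h2)
      _ = ((-1) ^ (i + 1 + 1) * (i + 1 : ℕ) * abar) * (a * (p : ℤ) ^ α) - (-1) ^ i := by ring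
      _ ≡ ((-1) ^ (i + 1 + 1) * (i + 1 : ℕ) * abar) * 0 - (-1) ^ i
          [ZMOD ((p : ℤ) ^ (2 * α))] := ((hsq.mul_left _).sub (Int.ModEq.refl _))
      _ = (-1) ^ (i + 1) := by ring
end

section
/- Let p be an odd prime and a, n positive integers with a > 2, p | a+2, and p | n. Write a + 2 = s·p^α with p ∤ s and n = n̄·p^δ with p ∤ n̄. If (p, α) ≠ (3, 1), then g_n(a) = ḡ·p^δ for some integer ḡ with ḡ ≡ (-1)^{n+1}·n̄ (mod p), where g_n is defined by g_1 = 1, g_2 = a, g_n = a·g_{n-1} − g_{n-2}. -/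
namespace Stmt9Aux

lemma three_pow_ge (t : ℕ) (ht : 1 ≤ t) : t + 2 ≤ 3 ^ t := by
  induction t with
  | zero => omega
  | succ t ih =>
    rcases Nat.eq_zero_or_pos t with rfl | h
    · norm_num
    · have h1 := ih h
      have h2 : 3 ^ (t + 1) = 3 * 3 ^ t := by ring
      omega

lemma five_pow_ge (t : ℕ) (ht : 1 ≤ t) : 2 * t + 3 ≤ 5 ^ t := by
  induction t with
  | zero => omega
  | succ t ih =>
    rcases Nat.eq_zero_or_pos t with rfl | h
    · norm_num
    · have h1 := ih h
      have h2 : 5 ^ (t + 1) = 5 * 5 ^ t := by ring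
      omega

lemma ineqB (p α i t : ℕ) (hp3 : p = 3 ∨ 5 ≤ p) (hα : 1 ≤ α)
    (hpa : p = 3 → 2 ≤ α) (hi : 1 ≤ i) (ht : p ^ t ≤ 2 * i + 1) :
    t + 1 ≤ i * α := by
  rcases Nat.eq_zero_or_pos t with rfl | htpos
  · have := Nat.mul_le_mul hi hα
    omega
  · rcases hp3 with rfl | hp5
    · have hα2 := hpa rfl
      have h1 := three_pow_ge t htpos
      have h2 : 2 * i ≤ i * α := by nlinarith
      omega
    · have h1 := five_pow_ge t htpos
      have h15 : 5 ^ t ≤ p ^ t := Nat.pow_le_pow_left hp5 t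
      have h2 : i ≤ i * α := by nlinarith
      omega

lemma chooseA (p n m δ : ℕ) (hp : p.Prime) (hδn : p ^ δ ∣ n) (hm1 : 1 ≤ m)
    (hmn : m ≤ n) : p ^ (δ - min δ (m.factorization p)) ∣ n.choose m := by
  have hn1 : 1 ≤ n := le_trans hm1 hmn
  have hc0 : n.choose m ≠ 0 := (Nat.choose_pos hmn).ne'
  have key : n * (n - 1).choose (m - 1) = n.choose m * m := by
    have h := Nat.add_one_mul_choose_eq (n - 1) (m - 1)
    rw [show n - 1 + 1 = n by omega, show m - 1 + 1 = m by omega] at h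
    exact h
  have hdvd : p ^ δ ∣ m * n.choose m := by
    rw [mul_comm, ← key]
    exact hδn.mul_right _
  have hfac : δ ≤ (m * n.choose m).factorization p :=
    (hp.pow_dvd_iff_le_factorization (by positivity)).mp hdvd
  rw [Nat.factorization_mul (by omega) hc0, Finsupp.add_apply] at hfac
  exact (hp.pow_dvd_iff_le_factorization hc0).mpr (by omega)

def imHom (d : ℤ) : ℤ√d →+ ℤ where
  toFun := Zsqrtd.im
  map_zero' := rfl
  map_add' _ _ := rfl

lemma omega_rec (a : ℤ) (x : ℤ√(a ^ 2 - 4)) :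
    (x * (⟨a, 1⟩ : ℤ√(a ^ 2 - 4)) ^ 2).im
      = 2 * a * (x * ⟨a, 1⟩).im - 4 * x.im := by
  simp only [pow_two, Zsqrtd.im_mul, Zsqrtd.re_mul]
  ring

lemma g_im (a : ℤ) : ∀ n : ℕ, ((⟨a, 1⟩ : ℤ√(a ^ 2 - 4)) ^ (n + 1)).im = 2 ^ n * g a (n + 1) := by
  intro n
  induction n using Nat.twoStepInduction with
  | zero => simp [g]
  | one =>
    show ((⟨a, 1⟩ : ℤ√(a ^ 2 - 4)) ^ 2).im = 2 ^ 1 * g a 2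
    simp [g, pow_two, Zsqrtd.im_mul]
    ring
  | more n ih1 ih2 =>
    have hsplit : (⟨a, 1⟩ : ℤ√(a ^ 2 - 4)) ^ (n + 2 + 1)
        = (⟨a, 1⟩ : ℤ√(a ^ 2 - 4)) ^ (n + 1) * (⟨a, 1⟩ : ℤ√(a ^ 2 - 4)) ^ 2 := by
      ring
    rw [hsplit, omega_rec, ← pow_succ, ih2, ih1]
    show _ = 2 ^ (n + 2) * (a * g a (n + 2) - g a (n + 1))
    ring

lemma intCast_pow_re_im (d c : ℤ) (q : ℕ) :
    (((c : ℤ√d)) ^ q).re = c ^ q ∧ (((c : ℤ√d)) ^ q).im = 0 := by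
  induction q with
  | zero => simp
  | succ q ih => simp [pow_succ, Zsqrtd.re_mul, Zsqrtd.im_mul, ih.1, ih.2]

lemma sq_pow_im (d : ℤ) (m : ℕ) :
    ((⟨0, 1⟩ : ℤ√d) ^ m).im = if m % 2 = 1 then d ^ (m / 2) else 0 := by
  have h2 : (⟨0, 1⟩ : ℤ√d) ^ 2 = (d : ℤ√d) := by
    ext <;> simp [pow_two, Zsqrtd.re_mul, Zsqrtd.im_mul]
  rcases Nat.even_or_odd m with ⟨q, hq⟩ | ⟨q, hq⟩
  · have hm : m = 2 * q := by omega
    have hm2 : m % 2 = 0 := by omega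
    rw [hm2, hm, pow_mul, h2]
    simp [(intCast_pow_re_im d d q).2]
  · have hm : m = 2 * q + 1 := by omega
    have h1 : m % 2 = 1 := by omega
    have h2' : m / 2 = q := by omega
    rw [h1, h2', hm, pow_succ, pow_mul, h2]
    simp [Zsqrtd.im_mul, (intCast_pow_re_im d d q).1, (intCast_pow_re_im d d q).2]

end Stmt9Aux

open Stmt9Aux in
/-- If p is an odd prime, a+2 = s·p^α (p ∤ s), n = n̄·p^δ (p ∤ n̄), and (p,α) ≠ (3,1),
    then g_n(a) = ḡ·p^δ with ḡ ≡ (-1)^{n+1}·n̄ (mod p). -/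
theorem stmt_9 (p : ℕ) (hp : p.Prime) (hp2 : p ≠ 2) (a : ℤ) (ha : 2 < a)
    (n s α nbar δ : ℕ) (hs : ¬ p ∣ s) (hα : 1 ≤ α) (ha2 : a + 2 = (s : ℤ) * (p : ℤ) ^ α)
    (hnbar : ¬ p ∣ nbar) (hδ : 1 ≤ δ) (hn : n = nbar * p ^ δ)
    (hpa : (p, α) ≠ (3, 1)) :
    ∃ gbar : ℤ, g a n = gbar * (p : ℤ) ^ δ ∧
      gbar ≡ (-1) ^ (n + 1) * nbar [ZMOD (p : ℤ)] := by
  haveI : Fact p.Prime := ⟨hp⟩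
  have hp3 : 3 ≤ p := by
    have := hp.two_le; omega
  have hnbar0 : 1 ≤ nbar := by
    rcases Nat.eq_zero_or_pos nbar with rfl | h
    · exact absurd (dvd_zero p) hnbar
    · exact h
  have hpδ1 : 1 ≤ p ^ δ := Nat.one_le_pow _ _ (by omega)
  have hn1 : 1 ≤ n := by
    rw [hn]; exact Nat.mul_pos hnbar0 hpδ1
  have hpa2 : (p : ℤ) ^ α ∣ a + 2 := ⟨s, by rw [ha2]; ring⟩
  have hpd : (p : ℤ) ^ α ∣ a ^ 2 - 4 :=
    hpa2.trans ⟨a - 2, by ring⟩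
  have hp4 : p = 3 ∨ 5 ≤ p := by
    have : p ≠ 4 := by rintro rfl; norm_num at hp
    omega
  have hpα : p = 3 → 2 ≤ α := by
    rintro rfl
    rcases Nat.lt_or_ge α 2 with h | h
    · have : α = 1 := by omega
      subst this
      exact absurd rfl hpa
    · exact h
  -- expansion
  have hsplit : (⟨a, 1⟩ : ℤ√(a ^ 2 - 4)) = ((a : ℤ√(a ^ 2 - 4)) + ⟨0, 1⟩) := by
    ext <;> simp
  have hsum : (2 : ℤ) ^ (n - 1) * g a n
      = ∑ k ∈ Finset.range (n + 1),
          a ^ k * ((⟨0, 1⟩ : ℤ√(a ^ 2 - 4)) ^ (n - k)).im * (n.choose k : ℤ) := by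
    have h1 := g_im a (n - 1)
    rw [show n - 1 + 1 = n by omega] at h1
    rw [← h1, hsplit, add_pow]
    rw [show ((∑ m ∈ Finset.range (n + 1),
        (a : ℤ√(a ^ 2 - 4)) ^ m * (⟨0, 1⟩ : ℤ√(a ^ 2 - 4)) ^ (n - m) * (n.choose m : ℤ√(a ^ 2 - 4))).im)
        = imHom (a ^ 2 - 4) (∑ m ∈ Finset.range (n + 1),
        (a : ℤ√(a ^ 2 - 4)) ^ m * (⟨0, 1⟩ : ℤ√(a ^ 2 - 4)) ^ (n - m) * (n.choose m : ℤ√(a ^ 2 - 4))) from rfl]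
    rw [map_sum]
    refine Finset.sum_congr rfl fun k _ => ?_
    show ((a : ℤ√(a ^ 2 - 4)) ^ k * (⟨0, 1⟩ : ℤ√(a ^ 2 - 4)) ^ (n - k) * (n.choose k : ℤ√(a ^ 2 - 4))).im = _
    simp only [Zsqrtd.im_mul, Zsqrtd.re_mul, Zsqrtd.re_natCast, Zsqrtd.im_natCast,
      (intCast_pow_re_im _ a k).1, (intCast_pow_re_im _ a k).2]
    ring
  -- split off the k = n-1 term
  have hmem : n - 1 ∈ Finset.range (n + 1) := Finset.mem_range.mpr (by omega)
  rw [← Finset.add_sum_erase _ _ hmem] at hsum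
  have hchoose : n.choose (n - 1) = n := by
    rw [Nat.choose_symm (show 1 ≤ n by omega), Nat.choose_one_right]
  have hmain : a ^ (n - 1) * ((⟨0, 1⟩ : ℤ√(a ^ 2 - 4)) ^ (n - (n - 1))).im * (n.choose (n - 1) : ℤ)
      = (n : ℤ) * a ^ (n - 1) := by
    rw [show n - (n - 1) = 1 by omega, hchoose, pow_one]
    show a ^ (n - 1) * (1 : ℤ) * n = _
    ring
  rw [hmain] at hsum
  have hdiv : ∀ k ∈ (Finset.range (n + 1)).erase (n - 1),
      (p : ℤ) ^ (δ + 1) ∣ a ^ k * ((⟨0, 1⟩ : ℤ√(a ^ 2 - 4)) ^ (n - k)).im * (n.choose k : ℤ) := by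
    intro k hk
    have hkne : k ≠ n - 1 := (Finset.mem_erase.mp hk).1
    have hkn : k ≤ n := by
      have := Finset.mem_range.mp (Finset.mem_erase.mp hk).2; omega
    rcases Nat.even_or_odd (n - k) with hev | hod
    · rw [Nat.even_iff] at hev
      rw [sq_pow_im, if_neg (by omega)]
      simp
    · obtain ⟨i, hi⟩ := hod
      have hm1 : (n - k) % 2 = 1 := by omega
      rw [sq_pow_im, if_pos hm1, show (n - k) / 2 = i by omega]
      have him : 1 ≤ i := by omega
      have hcs : n.choose k = n.choose (n - k) := (Nat.choose_symm hkn).symm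
      have h1 : p ^ (δ - min δ ((n - k).factorization p)) ∣ n.choose (n - k) :=
        chooseA p n (n - k) δ hp (by rw [hn]; exact Dvd.intro_left nbar rfl) (by omega) (by omega)
      have hptm : p ^ (min δ ((n - k).factorization p)) ≤ n - k := by
        have hd : p ^ (min δ ((n - k).factorization p)) ∣ n - k :=
          dvd_trans (pow_dvd_pow p (min_le_right _ _)) (Nat.ordProj_dvd (n - k) p)
        exact Nat.le_of_dvd (by omega) hd
      have h4 : min δ ((n - k).factorization p) + 1 ≤ i * α :=
        ineqB p α i _ hp4 hα hpα him (by omega)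
      have h2 : (p : ℤ) ^ (i * α) ∣ (a ^ 2 - 4) ^ i := by
        rw [mul_comm, pow_mul]
        exact pow_dvd_pow_of_dvd hpd i
      have h3 : (p : ℤ) ^ (δ - min δ ((n - k).factorization p)) ∣ (n.choose (n - k) : ℤ) := by
        exact_mod_cast Int.natCast_dvd_natCast.mpr h1
      have hfinal : (p : ℤ) ^ (δ + 1) ∣ (n.choose (n - k) : ℤ) * (a ^ 2 - 4) ^ i := by
        refine dvd_trans ?_ (mul_dvd_mul h3 h2)
        rw [← pow_add]
        refine pow_dvd_pow _ ?_
        have := min_le_left δ ((n - k).factorization p)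
        omega
      rw [hcs, show a ^ k * (a ^ 2 - 4) ^ i * (n.choose (n - k) : ℤ)
          = (n.choose (n - k) : ℤ) * (a ^ 2 - 4) ^ i * a ^ k by ring]
      exact hfinal.mul_right _
  obtain ⟨c, hc⟩ := Finset.dvd_sum hdiv
  rw [hc] at hsum
  have hnz : (n : ℤ) = (nbar : ℤ) * (p : ℤ) ^ δ := by rw [hn]; push_cast; ring
  have hcop : IsCoprime ((p : ℤ) ^ δ) ((2 : ℤ) ^ (n - 1)) := by
    have hc1 : Nat.Coprime p 2 := (Nat.coprime_primes hp Nat.prime_two).mpr hp2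
    have hc2 : IsCoprime (p : ℤ) (2 : ℤ) := by
      have := Nat.isCoprime_iff_coprime.mpr hc1
      exact_mod_cast this
    exact hc2.pow
  have h5 : (p : ℤ) ^ δ ∣ (2 : ℤ) ^ (n - 1) * g a n := by
    rw [hsum, hnz]
    exact dvd_add ⟨(nbar : ℤ) * a ^ (n - 1), by ring⟩ ⟨(p : ℤ) * c, by ring⟩
  obtain ⟨gbar, hg⟩ := hcop.dvd_of_dvd_mul_left h5
  refine ⟨gbar, by rw [hg]; ring, ?_⟩
  have hpne : ((p : ℤ) ^ δ) ≠ 0 := by positivity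
  have key : (2 : ℤ) ^ (n - 1) * gbar = (nbar : ℤ) * a ^ (n - 1) + (p : ℤ) * c := by
    apply mul_left_cancel₀ hpne
    rw [hg, hnz] at hsum
    linear_combination hsum
  rw [← ZMod.intCast_eq_intCast_iff]
  have hcast := congrArg (fun z : ℤ => (z : ZMod p)) key
  push_cast at hcast ⊢
  rw [ZMod.natCast_self] at hcast
  have hap : ((a : ℤ) : ZMod p) = -2 := by
    have hd : (p : ℤ) ∣ a + 2 := dvd_trans (dvd_pow_self _ (by omega)) hpa2
    have h0 : ((a + 2 : ℤ) : ZMod p) = 0 := by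
      rw [ZMod.intCast_zmod_eq_zero_iff_dvd]
      exact_mod_cast hd
    push_cast at h0
    linear_combination h0
  have h2ne : (2 : ZMod p) ≠ 0 := by
    intro h
    have h' : ((2 : ℕ) : ZMod p) = 0 := by exact_mod_cast h
    rw [ZMod.natCast_eq_zero_iff] at h'
    have := Nat.le_of_dvd (by norm_num) h'
    omega
  apply mul_left_cancel₀ (pow_ne_zero (n - 1) h2ne)
  have hneg : ((-1 : ZMod p)) ^ (n + 1) = (-1 : ZMod p) ^ (n - 1) := by
    rw [show n + 1 = (n - 1) + 2 by omega, pow_add]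
    norm_num
  rw [hneg]
  have hpow : ((-2 : ZMod p)) ^ (n - 1) = (-1 : ZMod p) ^ (n - 1) * 2 ^ (n - 1) := by
    rw [show (-2 : ZMod p) = -1 * 2 by ring, mul_pow]
  rw [hap, hpow] at hcast
  linear_combination hcast
end

section
/- Let v, k, λ be positive integers with k > λ + 2 and v = (k(k−1)−2)/λ + 1, and let p be an odd prime dividing k − λ + 2. Then p divides v if and only if λ ≡ 2 (mod p). -/
/-- If k > λ+2, λ(v-1) = k(k-1)-2, and p is an odd prime dividing k-λ+2,
    then p ∣ v iff λ ≡ 2 (mod p). -/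
theorem stmt_11 (v k lam : ℕ) (hv : 0 < v) (hl : 0 < lam) (hk : lam + 2 < k)
    (hveq : (lam : ℤ) * ((v : ℤ) - 1) = (k : ℤ) * ((k : ℤ) - 1) - 2)
    (p : ℕ) (hp : p.Prime) (hp2 : p ≠ 2)
    (hdvd : (p : ℤ) ∣ ((k : ℤ) - (lam : ℤ) + 2)) :
    (p : ℤ) ∣ (v : ℤ) ↔ (lam : ℤ) ≡ 2 [ZMOD (p : ℤ)] := by
  have hpi : Prime ((p : ℤ)) := Nat.prime_iff_prime_int.mp hp
  have key : (lam : ℤ) * v = ((lam : ℤ) - 2)^2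
      + ((k : ℤ) - lam + 2) * ((k : ℤ) + lam - 3) := by linear_combination hveq
  have hmod : (lam : ℤ) ≡ 2 [ZMOD (p : ℤ)] ↔ (p : ℤ) ∣ ((lam : ℤ) - 2) := by
    constructor
    · intro h; exact (Int.modEq_iff_dvd.mp h.symm)
    · intro h; exact (Int.modEq_iff_dvd.mpr h).symm
  rw [hmod]
  constructor
  · intro hpv
    have h1 : (p : ℤ) ∣ ((lam : ℤ) - 2)^2 := by
      have : (p : ℤ) ∣ (lam : ℤ) * v := Dvd.dvd.mul_left hpv _
      have h2 : (p : ℤ) ∣ ((k : ℤ) - lam + 2) * ((k : ℤ) + lam - 3) :=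
        Dvd.dvd.mul_right hdvd _
      have := dvd_sub this h2
      rw [key] at this
      simpa using this
    exact hpi.dvd_of_dvd_pow h1
  · intro hl2
    have h1 : (p : ℤ) ∣ (lam : ℤ) * v := by
      rw [key]
      exact dvd_add (dvd_pow hl2 two_ne_zero) (Dvd.dvd.mul_right hdvd _)
    rcases hpi.dvd_mul.mp h1 with h | h
    · exfalso
      have : (p : ℤ) ∣ 2 := by
        have := dvd_sub h hl2
        simpa using this
      have h2 : (p:ℤ) ≤ 2 := Int.le_of_dvd (by norm_num) this
      have h3 : 2 ≤ (p:ℤ) := by exact_mod_cast hp.two_le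
      have : p = 2 := by omega
      exact hp2 this
    · exact h
end

section
/- Let v, k, λ be positive integers with λ < k < v. If there exists a symmetric (v,k,λ)-covering whose excess is 2-regular with cycle type [c_1,...,c_t], then for some ordering of points and blocks, the incidence matrix A (a v×v 0-1 matrix) satisfies A·Aᵀ = diag(B_{c_1}(k−λ),...,B_{c_t}(k−λ)) + λ·J_v. Consequently det(diag(B_{c_1}(k−λ),...,B_{c_t}(k−λ)) + λ·J_v) is a perfect square. -/
/-- B_n(a): a·I plus the adjacency matrix of an n-cycle (off-diagonal entries 2 when n = 2). -/
def cycleMat (n : ℕ) (a : ℤ) : Matrix (Fin n) (Fin n) ℤ :=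
  Matrix.of fun j k =>
    (if j = k then a else 0) + (if ((j : ℕ) + 1) % n = (k : ℕ) then 1 else 0) +
      (if ((k : ℕ) + 1) % n = (j : ℕ) then 1 else 0)

lemma cycleMat_diag (n : ℕ) (hn : 2 ≤ n) (a : ℤ) (j : Fin n) :
    cycleMat n a j j = a := by
  have h : ((j : ℕ) + 1) % n ≠ (j : ℕ) := by
    have hj := j.isLt
    intro heq
    rcases Nat.lt_or_ge ((j : ℕ) + 1) n with hl | hg
    · rw [Nat.mod_eq_of_lt hl] at heq; omega
    · have hn1 : (j : ℕ) + 1 = n := by omega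
      rw [hn1, Nat.mod_self] at heq; omega
  simp [cycleMat, h]

lemma cycleMat_offdiag (n : ℕ) (a : ℤ) {j k : Fin n} (h : j ≠ k) :
    cycleMat n a j k = cycleMat n 0 j k := by
  simp [cycleMat, h]

/-- If a symmetric (v,k,λ)-covering has 2-regular excess of cycle type [c_1,...,c_t],
    then for some ordering of points and blocks the incidence matrix A satisfies
    A·Aᵀ = diag(B_{c_1}(k-λ),...,B_{c_t}(k-λ)) + λJ, and the determinant of the
    latter matrix is a perfect square. -/
theorem stmt_14 (v k lam t : ℕ) (hlk : lam < k) (hkv : k < v)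
    (c : Fin t → ℕ) (hc : ∀ i, 2 ≤ c i) (hsum : ∑ i, c i = v)
    (blocks : Fin v → Finset (Fin v))
    (hsize : ∀ b, (blocks b).card = k)
    (hrep : ∀ x : Fin v, (Finset.univ.filter fun b => x ∈ blocks b).card = k)
    (hcov : ∀ x y : Fin v, x ≠ y →
      lam ≤ (Finset.univ.filter fun b => x ∈ blocks b ∧ y ∈ blocks b).card)
    (ρ : (Σ i : Fin t, Fin (c i)) ≃ Fin v)
    (hexcess : ∀ x y : Σ i : Fin t, Fin (c i), x ≠ y →
      ((Finset.univ.filter fun b => ρ x ∈ blocks b ∧ ρ y ∈ blocks b).card : ℤ) =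
        (lam : ℤ) + Matrix.blockDiagonal' (fun i => cycleMat (c i) 0) x y) :
    ∃ σ τ : (Σ i : Fin t, Fin (c i)) ≃ Fin v,
      (Matrix.of fun x b => if σ x ∈ blocks (τ b) then (1 : ℤ) else 0) *
          Matrix.transpose (Matrix.of fun x b => if σ x ∈ blocks (τ b) then (1 : ℤ) else 0) =
        Matrix.blockDiagonal' (fun i => cycleMat (c i) ((k : ℤ) - (lam : ℤ))) +
          Matrix.of (fun _ _ => (lam : ℤ)) ∧
      IsSquare (Matrix.blockDiagonal' (fun i => cycleMat (c i) ((k : ℤ) - (lam : ℤ))) +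
          Matrix.of (fun _ _ => (lam : ℤ))).det := by
  classical
  refine ⟨ρ, ρ, ?_⟩
  set A : Matrix (Σ i : Fin t, Fin (c i)) (Σ i : Fin t, Fin (c i)) ℤ :=
    Matrix.of fun x b => if ρ x ∈ blocks (ρ b) then (1 : ℤ) else 0 with hA
  have key : A * A.transpose =
      Matrix.blockDiagonal' (fun i => cycleMat (c i) ((k : ℤ) - (lam : ℤ))) +
        Matrix.of (fun _ _ => (lam : ℤ)) := by
    ext x y
    have hsum' : (A * A.transpose) x y =
        ((Finset.univ.filter fun b : Fin v => ρ x ∈ blocks b ∧ ρ y ∈ blocks b).card : ℤ) := by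
      rw [Matrix.mul_apply]
      have := Equiv.sum_comp ρ (fun b : Fin v =>
        (if ρ x ∈ blocks b then (1 : ℤ) else 0) * (if ρ y ∈ blocks b then (1 : ℤ) else 0))
      simp only [hA, Matrix.transpose_apply, Matrix.of_apply]
      rw [this]
      rw [Finset.card_filter]
      push_cast
      refine Finset.sum_congr rfl fun b _ => ?_
      split_ifs with h1 h2 h3 <;> simp_all
    rw [hsum']
    by_cases hxy : x = y
    · subst hxy
      obtain ⟨i, j⟩ := x
      simp only [and_self]
      rw [hrep (ρ ⟨i, j⟩)]
      simp only [Matrix.add_apply, Matrix.of_apply, Matrix.blockDiagonal'_apply_eq,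
        cycleMat_diag (c i) (hc i)]
      push_cast
      ring
    · rw [hexcess x y hxy]
      simp only [Matrix.add_apply, Matrix.of_apply]
      have : Matrix.blockDiagonal' (fun i => cycleMat (c i) ((k : ℤ) - (lam : ℤ))) x y =
          Matrix.blockDiagonal' (fun i => cycleMat (c i) 0) x y := by
        obtain ⟨i, j⟩ := x
        obtain ⟨i', j'⟩ := y
        rw [Matrix.blockDiagonal'_apply', Matrix.blockDiagonal'_apply']
        split
        · next h =>
          subst h
          have hjj : j ≠ j' := fun hh => hxy (by subst hh; rfl)
          exact cycleMat_offdiag (c i) _ (by simpa using hjj)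
        · rfl
      rw [this]; ring
  refine ⟨key, A.det, ?_⟩
  rw [← key, Matrix.det_mul, Matrix.det_transpose]
end

section
/- For any integer a > 2 and any n ≥ 2, there exists a polynomial h with integer coefficients such that det(B_n(a)) = (a+2)·h(a)² if n is odd, and det(B_n(a)) = (a²−4)·h(a)² if n is even, where B_n(a) is a·I plus the adjacency matrix of an n-cycle (with off-diagonal entries 2 for n = 2). -/
def rotMat (N : ℕ) : Matrix (Fin (N+2)) (Fin (N+2)) ℝ :=
  Matrix.of fun j k => if k + 1 = j then 1 else 0

def lucg (a : ℤ) : ℕ → ℤ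
  | 0 => 0
  | 1 => 1
  | m + 2 => a * lucg a (m+1) - lucg a m

lemma lucg_pow (a : ℤ) (x : ℝ) (hx : x ^ 2 = a * x - 1) :
    ∀ m : ℕ, x ^ (m+1) = (lucg a (m+1) : ℝ) * x - (lucg a m : ℝ) := by
  intro m
  induction m with
  | zero => simp [lucg]
  | succ m ih =>
    have h1 : x ^ (m+2) = x * x ^ (m+1) := by ring
    rw [h1, ih]
    have h2 : lucg a (m+2) = a * lucg a (m+1) - lucg a m := rfl
    rw [h2]
    push_cast
    linear_combination (lucg a (m+1) : ℝ) * hx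

open Fin.NatCast in
lemma perm_classify (N : ℕ) (σ : Equiv.Perm (Fin (N+2)))
    (hall : ∀ i, σ i = i ∨ σ i = i + 1) : σ = 1 ∨ σ = finRotate (N+2) := by
  by_cases hex : ∃ k, σ k = k + 1
  · right
    obtain ⟨k, hk⟩ := hex
    have key : ∀ t : ℕ, σ (k + (t : Fin (N+2))) = (k + (t : Fin (N+2))) + 1 := by
      intro t
      induction t with
      | zero => simpa using hk
      | succ t ih =>
        have hcast : ((t+1 : ℕ) : Fin (N+2)) = (t : Fin (N+2)) + 1 := by
          push_cast; ring
        rw [hcast, ← add_assoc]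
        rcases hall (k + (t : Fin (N+2)) + 1) with h2 | h2
        · exfalso
          have h3 : σ (k + (t : Fin (N+2))) = σ (k + (t : Fin (N+2)) + 1) := by
            rw [ih, h2]
          have h4 := σ.injective h3
          have h5 : (1 : Fin (N+2)) = 0 := by
            have := left_eq_add.mp h4
            exact this
          simp [Fin.ext_iff] at h5
        · exact h2
    ext j
    have hj : k + ((j - k).val : Fin (N+2)) = j := by
      rw [Fin.cast_val_eq_self]; abel
    rw [finRotate_succ_apply, ← hj, key]
  · left
    push_neg at hex
    ext j
    rcases hall j with h | h
    · simp [h]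
    · exact absurd h (hex j)

lemma det_rot (N : ℕ) (c : ℝ) :
    (c • (1 : Matrix (Fin (N+2)) (Fin (N+2)) ℝ) + rotMat N).det
      = c ^ (N+2) + (-1) ^ (N+1) := by
  set M := c • (1 : Matrix (Fin (N+2)) (Fin (N+2)) ℝ) + rotMat N with hM
  have hMent : ∀ j k, M j k = (if j = k then c else 0) + (if k + 1 = j then 1 else 0) := by
    intro j k
    simp [hM, rotMat, Matrix.add_apply, Matrix.smul_apply, Matrix.one_apply, smul_eq_mul,
      mul_ite, mul_one, mul_zero]
  have hone : ∀ i : Fin (N+2), i + 1 ≠ i := by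
    intro i h
    have h2 : (1 : Fin (N+2)) = 0 := add_eq_left.mp h
    simp [Fin.ext_iff] at h2
  have hne : (1 : Equiv.Perm (Fin (N+2))) ≠ finRotate (N+2) := by
    intro h
    have h1 : finRotate (N+2) 0 = 0 + 1 := finRotate_succ_apply 0
    rw [← h] at h1
    simp at h1
  rw [Matrix.det_apply']
  have hzero : ∀ σ ∈ (Finset.univ : Finset (Equiv.Perm (Fin (N+2)))),
      σ ∉ ({1, finRotate (N+2)} : Finset (Equiv.Perm (Fin (N+2)))) →
      ((Equiv.Perm.sign σ : ℤ) : ℝ) * ∏ i, M (σ i) i = 0 := by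
    intro σ _ hσ
    simp only [Finset.mem_insert, Finset.mem_singleton, not_or] at hσ
    by_cases hall : ∀ i, σ i = i ∨ σ i = i + 1
    · rcases perm_classify N σ hall with h | h
      · exact absurd h hσ.1
      · exact absurd h hσ.2
    · push_neg at hall
      obtain ⟨i, h1, h2⟩ := hall
      have hent : M (σ i) i = 0 := by
        rw [hMent]
        rw [if_neg h1, if_neg (fun h => h2 h.symm)]
        ring
      exact mul_eq_zero_of_right _ (Finset.prod_eq_zero (Finset.mem_univ i) hent)
  rw [← Finset.sum_subset (Finset.subset_univ ({1, finRotate (N+2)} :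
      Finset (Equiv.Perm (Fin (N+2))))) hzero, Finset.sum_pair hne]
  have t1 : ((Equiv.Perm.sign (1 : Equiv.Perm (Fin (N+2))) : ℤ) : ℝ) *
      ∏ i, M ((1 : Equiv.Perm (Fin (N+2))) i) i = c ^ (N+2) := by
    have hd : ∀ i : Fin (N+2), M i i = c := by
      intro i
      rw [hMent, if_pos rfl, if_neg (hone i)]
      ring
    simp [hd, Finset.prod_const, Finset.card_univ]
  have t2 : ((Equiv.Perm.sign (finRotate (N+2)) : ℤ) : ℝ) *
      ∏ i, M (finRotate (N+2) i) i = (-1) ^ (N+1) := by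
    have hent : ∀ i : Fin (N+2), M (i + 1) i = 1 := by
      intro i
      rw [hMent, if_neg (hone i), if_pos rfl]
      ring
    rw [sign_finRotate]
    simp [finRotate_succ_apply, hent]
  rw [t1, t2]

open Matrix in
lemma cycle_factor (N : ℕ) (a : ℤ) (α : ℝ) (hα : α ≠ 0) (hsum : α + α⁻¹ = (a:ℝ)) :
    ((cycleMat (N+2) a).map (Int.cast : ℤ → ℝ)) =
      (rotMat N)ᵀ * ((α • 1 + rotMat N) * (α⁻¹ • 1 + rotMat N)) := by
  have hcond : ∀ j k : Fin (N+2), ((((j:ℕ) + 1) % (N+2) = (k:ℕ)) ↔ j + 1 = k) := by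
    intro j k
    rw [Fin.ext_iff, Fin.add_def]
    simp [Fin.val_one]
  have hQP : (rotMat N)ᵀ * rotMat N = 1 := by
    ext j k
    simp only [Matrix.mul_apply, Matrix.transpose_apply, rotMat, Matrix.of_apply,
      ite_mul, one_mul, zero_mul, Matrix.one_apply]
    rw [Finset.sum_ite_eq (Finset.univ) (j+1) (fun i => if k + 1 = i then (1:ℝ) else 0)]
    simp [add_left_inj, eq_comm]
  have e1 : (α • (1 : Matrix (Fin (N+2)) (Fin (N+2)) ℝ) + rotMat N) *
      (α⁻¹ • 1 + rotMat N) = 1 + (a:ℝ) • rotMat N + rotMat N * rotMat N := by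
    rw [Matrix.add_mul, Matrix.smul_mul, Matrix.one_mul, Matrix.mul_add, Matrix.mul_smul,
      Matrix.mul_one, smul_add, smul_smul, mul_inv_cancel₀ hα, one_smul]
    rw [← hsum, add_smul]
    abel
  rw [e1]
  rw [Matrix.mul_add, Matrix.mul_add, Matrix.mul_one, Matrix.mul_smul, hQP, ← Matrix.mul_assoc,
    hQP, Matrix.one_mul]
  ext j k
  simp only [cycleMat, Matrix.map_apply, Matrix.of_apply, Matrix.add_apply, Matrix.smul_apply,
    Matrix.one_apply, Matrix.transpose_apply, rotMat, smul_eq_mul, mul_ite, mul_one, mul_zero]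
  push_cast
  simp only [hcond]
  ring

/-- det(B_n(a)) = (a+2)·h(a)² for odd n and (a²-4)·h(a)² for even n,
    for some integer polynomial h. -/
theorem stmt_16 (a : ℤ) (ha : 2 < a) (n : ℕ) (hn : 2 ≤ n) :
    ∃ h : Polynomial ℤ,
      (cycleMat n a).det = (if Odd n then a + 2 else a ^ 2 - 4) * (h.eval a) ^ 2 := by
  obtain ⟨N, rfl⟩ : ∃ N, n = N + 2 := ⟨n - 2, by omega⟩
  have ha2 : (2:ℝ) < (a:ℝ) := by exact_mod_cast ha
  obtain ⟨d, hd2, hdpos⟩ : ∃ d : ℝ, d^2 = (a:ℝ)^2 - 4 ∧ 0 < d :=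
    ⟨Real.sqrt ((a:ℝ)^2 - 4), Real.sq_sqrt (by nlinarith), Real.sqrt_pos.mpr (by nlinarith)⟩
  obtain ⟨α, hαdef⟩ : ∃ x : ℝ, x = ((a:ℝ) + d)/2 := ⟨_, rfl⟩
  have hα : α ≠ 0 := by
    have : 0 < α := by rw [hαdef]; nlinarith
    exact ne_of_gt this
  have hinv : α⁻¹ = ((a:ℝ) - d)/2 := by
    have h1 : (((a:ℝ) - d)/2) * α = 1 := by
      rw [hαdef]; linear_combination (-(1:ℝ)/4) * hd2
    exact (eq_inv_of_mul_eq_one_left h1).symm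
  have hsum : α + α⁻¹ = (a:ℝ) := by rw [hinv, hαdef]; ring
  have hq1 : α^2 = (a:ℝ)*α - 1 := by
    rw [hαdef]; linear_combination ((1:ℝ)/4) * hd2
  have hq2 : (α⁻¹)^2 = (a:ℝ)*α⁻¹ - 1 := by
    rw [hinv]; linear_combination ((1:ℝ)/4) * hd2
  have hdiff : α - α⁻¹ = d := by rw [hinv, hαdef]; ring
  have hdne : α - α⁻¹ ≠ 0 := by rw [hdiff]; exact ne_of_gt hdpos
  have hg : ∀ m : ℕ, α^m - (α⁻¹)^m = (lucg a m : ℝ) * (α - α⁻¹) := by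
    intro m
    cases m with
    | zero => norm_num [lucg]
    | succ m =>
      have h1 := lucg_pow a α hq1 m
      have h2 := lucg_pow a α⁻¹ hq2 m
      linear_combination h1 - h2
  have hdetP : (rotMat N).det = (-1:ℝ)^(N+1) := by
    have h := det_rot N 0
    simpa using h
  have h0 : ((cycleMat (N+2) a).det : ℝ) = ((cycleMat (N+2) a).map (Int.cast : ℤ → ℝ)).det := by
    have h := RingHom.map_det (Int.castRingHom ℝ) (cycleMat (N+2) a)
    simpa [RingHom.mapMatrix_apply] using h
  have hdet : ((cycleMat (N+2) a).det : ℝ)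
      = (-1)^(N+1) * ((α^(N+2) + (-1)^(N+1)) * ((α^(N+2))⁻¹ + (-1)^(N+1))) := by
    rw [h0, cycle_factor N a α hα hsum, Matrix.det_mul, Matrix.det_mul, Matrix.det_transpose,
      hdetP, det_rot, det_rot, inv_pow]
  have hαβ : α * α⁻¹ = 1 := mul_inv_cancel₀ hα
  obtain ⟨β, hβ⟩ : ∃ x : ℝ, x = α⁻¹ := ⟨_, rfl⟩
  rw [← hβ] at hαβ hsum hdne hg
  rcases Nat.even_or_odd (N+2) with he | ho
  · -- even case
    obtain ⟨r, hr⟩ := id he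
    have hm : N + 2 = 2 * r := by omega
    refine ⟨Polynomial.C (lucg a r), ?_⟩
    rw [if_neg ((Nat.not_odd_iff_even.mpr he)), Polynomial.eval_C]
    apply Int.cast_injective (α := ℝ)
    push_cast
    rw [← h0, hdet, ← inv_pow, ← hβ]
    have hpar : (-1:ℝ)^(N+1) = -1 := Odd.neg_one_pow ⟨r - 1, by omega⟩
    rw [hpar, hm, mul_comm 2 r]
    simp only [pow_mul]
    have hgm := hg r
    obtain ⟨A, hA⟩ : ∃ x : ℝ, x = α^r := ⟨_, rfl⟩
    obtain ⟨B, hB⟩ : ∃ x : ℝ, x = β^r := ⟨_, rfl⟩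
    rw [← hA, ← hB] at hgm ⊢
    have hAB : A * B = 1 := by rw [hA, hB, ← mul_pow, hαβ, one_pow]
    linear_combination ((lucg a r : ℝ)^2*(α+β+(a:ℝ))) * hsum +
      (-4*(lucg a r : ℝ)^2) * hαβ +
      (A - B + (lucg a r : ℝ)*(α-β)) * hgm + (-(A*B-1)) * hAB
  · -- odd case
    obtain ⟨r, hr⟩ := id ho
    have hm : N + 2 = 2 * r + 1 := by omega
    refine ⟨Polynomial.C (lucg a (r+1) - lucg a r), ?_⟩
    rw [if_pos ho, Polynomial.eval_C]
    apply Int.cast_injective (α := ℝ)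
    push_cast
    rw [← h0, hdet, ← inv_pow, ← hβ]
    have hpar : (-1:ℝ)^(N+1) = 1 := Even.neg_one_pow ⟨r, by omega⟩
    rw [hpar, hm]
    simp only [pow_succ, mul_comm 2 r, pow_mul]
    have h1 := hg (r+1)
    have h2 := hg r
    simp only [pow_succ] at h1
    obtain ⟨A, hA⟩ : ∃ x : ℝ, x = α^r := ⟨_, rfl⟩
    obtain ⟨B, hB⟩ : ∃ x : ℝ, x = β^r := ⟨_, rfl⟩
    rw [← hA, ← hB] at h1 h2 ⊢
    have hAB : A * B = 1 := by rw [hA, hB, ← mul_pow, hαβ, one_pow]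
    have hs : A*α - B*β - (A - B) = ((lucg a (r+1) : ℝ) - (lucg a r : ℝ)) * (α - β) := by
      linear_combination h1 - h2
    refine mul_left_cancel₀ (pow_ne_zero 2 hdne) ?_
    linear_combination
      (-2 + 2*B^2 + 2*A^2 - 2*A^2*B^2 - 3*β*B^2 + 2*β*A*B + β*A^2 + β^2*A^2*B^2 + α*B^2
        + 2*α*A*B - 3*α*A^2 - 2*α*β*A^2*B^2 + α^2*A^2*B^2) * hαβ +
      (2 - 2*A*B - β^2 + β^2*A*B - α^2 + α^2*A*B) * hAB +
      ((A*α - B*β - (A - B))^2) * hsum +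
      (((a:ℝ)+2)*((A*α - B*β - (A - B)) + (α-β)*((lucg a (r+1) : ℝ) - (lucg a r : ℝ)))) * hs
end
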